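/- Let C be a small category with finite limits, let E and F be Grothendieck topoi, and let f^* ⊣ f_* be an adjunction with f^* : F ⥤ E preserving finite limits. For every functor x^* : (Cᵒᵖ ⥤ Type) ⥤ E preserving finite limits and small colimits, let R(x^*) : (Cᵒᵖ ⥤ Type) ⥤ F be the pointwise left Kan extension along the Yoneda embedding y : C ⥤ (Cᵒᵖ ⥤ Type) of the composite f_* ∘ x^* ∘ y : C ⥤ F. Then R(x^*) preserves finite limits and small colimits, and for every functor g^* : (Cᵒᵖ ⥤ Type) ⥤ F preserving finite limits and small colimits there is a bijection, natural in g^*, between natural transformations f^* ∘ g^* ⟶ x^* and natural transformations g^* ⟶ R(x^*). (Presheaf topoi are weakly right Kan injective with respect to all geometric morphisms, the right Kan extension in the 2-category of topoi having inverse image R(x^*).) -/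

import Mathlib

universe u

open CategoryTheory Limits

/-- A functor is (the inverse image of) a generalised point if it preserves finite limits
and small colimits. -/
def IsPoint {X : Type*} [Category X] {E : Type*} [Category E] (G : X ⥤ E) : Prop :=
  Nonempty (PreservesFiniteLimits G) ∧ Nonempty (PreservesColimitsOfSize.{u, u} G)

namespace Statement4Aux

section TransAdj

variable {P : Type*} [Category P] {E₁ E₂ : Type*} [Category E₁] [Category E₂]

/-- The adjunction between functor categories induced by `adj`, as an equivalence of
hom types. -/
@[simps]
def transAdj {fstar : E₂ ⥤ E₁} {fsub : E₁ ⥤ E₂} (adj : fstar ⊣ fsub)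
    (g : P ⥤ E₂) (x : P ⥤ E₁) : ((g ⋙ fstar) ⟶ x) ≃ (g ⟶ x ⋙ fsub) where
  toFun β := Functor.whiskerLeft g adj.unit ≫ Functor.whiskerRight β fsub
  invFun γ := Functor.whiskerRight γ fstar ≫ Functor.whiskerLeft x adj.counit
  left_inv β := by
    ext p
    simp
  right_inv γ := by
    ext p
    simp

lemma transAdj_naturality_left {fstar : E₂ ⥤ E₁} {fsub : E₁ ⥤ E₂} (adj : fstar ⊣ fsub)
    (g g' : P ⥤ E₂) (x : P ⥤ E₁) (φ : g' ⟶ g) (β : (g ⋙ fstar) ⟶ x) :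
    transAdj adj g' x (Functor.whiskerRight φ fstar ≫ β) = φ ≫ transAdj adj g x β := by
  ext p
  simp

end TransAdj

section YonedaAux

lemma isLeftKanExtension_of_iso₁' {C D H : Type*} [Category C] [Category D] [Category H]
    {L L' : C ⥤ D} (iso₁ : L ≅ L') {F : C ⥤ H} (F' : D ⥤ H) (α : F ⟶ L ⋙ F')
    [F'.IsLeftKanExtension α] : F'.IsLeftKanExtension (α ≫ Functor.whiskerRight iso₁.hom F') :=
  ⟨⟨(IsInitial.isInitialIffObj (Functor.leftExtensionEquivalenceOfIso₁ iso₁ F).functor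
    (Functor.LeftExtension.mk F' α)).1 (F'.isUniversalOfIsLeftKanExtension α)⟩⟩

lemma isLeftKanExtension_yoneda {C : Type u} [SmallCategory C] {E : Type*} [Category.{u} E]
    [HasColimitsOfSize.{u, u} E]
    {A : C ⥤ E} (L : (Cᵒᵖ ⥤ Type u) ⥤ E) [PreservesColimitsOfSize.{u, u} L]
    (e : A ≅ yoneda ⋙ L) : L.IsLeftKanExtension e.hom := by
  haveI := Presheaf.isLeftKanExtension_of_preservesColimits.{0} L
    (e ≪≫ Functor.isoWhiskerRight uliftYonedaIsoYoneda.{u, u, u}.symm L)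
  haveI := isLeftKanExtension_of_iso₁' uliftYonedaIsoYoneda.{u, u, u} L
    (e ≪≫ Functor.isoWhiskerRight uliftYonedaIsoYoneda.{u, u, u}.symm L).hom
  convert this using 1
  ext X
  simp [← Functor.map_comp]

lemma preservesColimits_of_isLeftKanExtension_yoneda {C : Type u} [SmallCategory C]
    {E : Type*} [Category.{u} E] [HasColimitsOfSize.{u, u} E] {A : C ⥤ E} (L : (Cᵒᵖ ⥤ Type u) ⥤ E)
    (α : A ⟶ yoneda ⋙ L) [L.IsLeftKanExtension α] : PreservesColimitsOfSize.{u, u} L := by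
  haveI := isLeftKanExtension_of_iso₁' uliftYonedaIsoYoneda.{u, u, u}.symm L α
  exact Presheaf.preservesColimitsOfSize_of_isLeftKanExtension.{0} L
    (α ≫ Functor.whiskerRight uliftYonedaIsoYoneda.{u, u, u}.symm.hom L)

end YonedaAux

section TypeCase

variable {C : Type u} [SmallCategory C]

/-- The cocone over `Hom(-, c)` restricted to the category of elements of `G`, with point
`G.obj c`. -/
@[simps]
def elementsCocone (G : C ⥤ Type u) (c : C) :
    Cocone ((CategoryOfElements.π G).op ⋙ yoneda.obj c) where
  pt := G.obj c
  ι :=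
    { app := fun e => TypeCat.ofHom (fun (f : e.unop.1 ⟶ c) => G.map f e.unop.2)
      naturality := fun e e' φ => by
        ext f
        dsimp
        change G.map (φ.unop.1 ≫ f) e'.unop.2 = G.map f e.unop.2
        exact (G.map_comp_apply _ _ _).trans (congrArg (fun y => G.map f y) φ.unop.2) }

/-- The cocone `elementsCocone` is a colimit cocone (the co-Yoneda lemma). -/
def elementsCoconeIsColimit (G : C ⥤ Type u) (c : C) : IsColimit (elementsCocone G c) where
  desc s := TypeCat.ofHom (fun x => s.ι.app (Opposite.op ⟨c, x⟩) (𝟙 c))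
  fac s j := by
    ext f
    have h := types_congr_hom (s.w (Quiver.Hom.op
      (⟨f, rfl⟩ : j.unop ⟶ (⟨c, G.map f j.unop.2⟩ : G.Elements)))) (𝟙 c)
    change s.ι.app j (f ≫ 𝟙 c) = _ at h
    rw [Category.comp_id] at h
    exact h.symm
  uniq s m hm := by
    ext x
    have h := types_congr_hom (hm (Opposite.op ⟨c, x⟩)) (𝟙 c)
    change m (G.map (𝟙 c) x) = _ at h
    rw [G.map_id] at h
    exact h

/-- The explicit colimit model for the left Kan extension of `G` along the Yoneda
embedding. -/
noncomputable def elementsModel (G : C ⥤ Type u) : (Cᵒᵖ ⥤ Type u) ⥤ Type u :=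
  (Functor.whiskeringLeft G.Elementsᵒᵖ Cᵒᵖ (Type u)).obj (CategoryOfElements.π G).op ⋙ colim

/-- The model `elementsModel G` extends `G` along the Yoneda embedding. -/
noncomputable def elementsModelIso (G : C ⥤ Type u) : G ≅ yoneda ⋙ elementsModel G :=
  NatIso.ofComponents
    (fun c => (elementsCoconeIsColimit G c).coconePointUniqueUpToIso (colimit.isColimit _))
    (fun {c c'} f => (elementsCoconeIsColimit G c).hom_ext fun j => by
      ext g
      have h1 := types_congr_hom ((elementsCoconeIsColimit G c').comp_coconePointUniqueUpToIso_hom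
        (colimit.isColimit ((CategoryOfElements.π G).op ⋙ yoneda.obj c')) j) (g ≫ f)
      have h2 := types_congr_hom ((elementsCoconeIsColimit G c).comp_coconePointUniqueUpToIso_hom
        (colimit.isColimit ((CategoryOfElements.π G).op ⋙ yoneda.obj c)) j) g
      have h3 := types_congr_hom (colimit.ι_map (F := (CategoryOfElements.π G).op ⋙ yoneda.obj c)
        (G := (CategoryOfElements.π G).op ⋙ yoneda.obj c')
        (Functor.whiskerLeft (CategoryOfElements.π G).op (yoneda.map f)) j) g
      dsimp at h1 h2 h3 ⊢
      have h4 : G.map (g ≫ f) j.unop.2 = G.map f (G.map g j.unop.2) := G.map_comp_apply g f _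
      exact (congrArg (fun y => ((elementsCoconeIsColimit G c').coconePointUniqueUpToIso
        (colimit.isColimit _)).hom y) h4).symm.trans (h1.trans (h3.symm.trans
          (congrArg (fun y => colimMap (Functor.whiskerLeft (CategoryOfElements.π G).op
            (yoneda.map f)) y) h2.symm))))

/-- If `G : C ⥤ Type u` preserves finite limits (where `C` is small with finite limits), then
any colimit-preserving extension of `G` along the Yoneda embedding preserves finite limits. -/
lemma preservesFiniteLimits_extension_type [HasFiniteLimits C] (G : C ⥤ Type u)
    [PreservesFiniteLimits G] (L : (Cᵒᵖ ⥤ Type u) ⥤ Type u)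
    [PreservesColimitsOfSize.{u, u} L] (e : G ≅ yoneda ⋙ L) : PreservesFiniteLimits L := by
  have : RepresentablyFlat G := flat_of_preservesFiniteLimits G
  haveI : IsCofiltered G.Elements :=
    IsCofiltered.of_equivalence (CategoryOfElements.structuredArrowEquivalence G).symm
  haveI : IsFiltered G.Elementsᵒᵖ := inferInstance
  haveI h1 : PreservesFiniteLimits
      ((Functor.whiskeringLeft G.Elementsᵒᵖ Cᵒᵖ (Type u)).obj (CategoryOfElements.π G).op) :=
    PreservesLimitsOfSize.preservesFiniteLimits.{u, u} _
  haveI h2 : PreservesFiniteLimits (colim : (G.Elementsᵒᵖ ⥤ Type u) ⥤ Type u) :=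
    inferInstance
  haveI hM : PreservesFiniteLimits (elementsModel G) := comp_preservesFiniteLimits _ _
  haveI : PreservesColimitsOfSize.{u, u} (elementsModel G) := comp_preservesColimits _ _
  haveI := isLeftKanExtension_yoneda (elementsModel G) (elementsModelIso G)
  haveI := isLeftKanExtension_yoneda L e
  exact preservesFiniteLimits_of_natIso
    (Functor.leftKanExtensionUnique _ (elementsModelIso G).hom _ e.hom)

/-- If `B : C ⥤ (Dᵒᵖ ⥤ Type u)` preserves finite limits (where `C` is small with finite
limits), then any colimit-preserving extension of `B` along the Yoneda embedding preserves
finite limits. -/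
lemma preservesFiniteLimits_extension_presheaf [HasFiniteLimits C]
    {D : Type u} [SmallCategory D]
    (B : C ⥤ (Dᵒᵖ ⥤ Type u)) [PreservesFiniteLimits B]
    (L : (Cᵒᵖ ⥤ Type u) ⥤ (Dᵒᵖ ⥤ Type u)) [PreservesColimitsOfSize.{u, u} L]
    (e : B ≅ yoneda ⋙ L) : PreservesFiniteLimits L := by
  constructor
  intro J _ _
  apply preservesLimitsOfShape_of_evaluation
  intro d
  haveI : PreservesColimitsOfSize.{u, u} (L ⋙ (evaluation Dᵒᵖ (Type u)).obj d) :=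
    comp_preservesColimits _ _
  haveI : PreservesFiniteLimits ((evaluation Dᵒᵖ (Type u)).obj d) :=
    PreservesLimitsOfSize.preservesFiniteLimits.{u, u} _
  haveI : PreservesFiniteLimits (B ⋙ (evaluation Dᵒᵖ (Type u)).obj d) :=
    comp_preservesFiniteLimits _ _
  haveI := preservesFiniteLimits_extension_type (B ⋙ (evaluation Dᵒᵖ (Type u)).obj d)
    (L ⋙ (evaluation Dᵒᵖ (Type u)).obj d)
    (Functor.isoWhiskerRight e ((evaluation Dᵒᵖ (Type u)).obj d) ≪≫ Functor.associator _ _ _)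
  exact this.preservesFiniteLimits J

end TypeCase

end Statement4Aux

open Statement4Aux

/-- Presheaf topoi are weakly right Kan injective with respect to all geometric morphisms:
if `R` is the pointwise left Kan extension along Yoneda of `f_* ∘ x^* ∘ y`, then `R`
preserves finite limits and small colimits, and for every inverse image
`g^* : (Cᵒᵖ ⥤ Type) ⥤ F` there is a bijection, natural in `g^*`, between natural
transformations `f^* ∘ g^* ⟶ x^*` and natural transformations `g^* ⟶ R`. -/
theorem statement4 {C : Type u} [SmallCategory C] [HasFiniteLimits C]
    {D₁ D₂ : Type u} [SmallCategory D₁] [SmallCategory D₂]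
    (J : GrothendieckTopology D₁) (K : GrothendieckTopology D₂)
    (fstar : Sheaf K (Type u) ⥤ Sheaf J (Type u))
    (fsub : Sheaf J (Type u) ⥤ Sheaf K (Type u))
    (adj : fstar ⊣ fsub) [PreservesFiniteLimits fstar]
    (xstar : (Cᵒᵖ ⥤ Type u) ⥤ Sheaf J (Type u))
    (hx : IsPoint.{u} xstar)
    (R : (Cᵒᵖ ⥤ Type u) ⥤ Sheaf K (Type u))
    (α : yoneda ⋙ xstar ⋙ fsub ⟶ yoneda ⋙ R)
    (hR : (Functor.LeftExtension.mk R α).IsPointwiseLeftKanExtension) :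
    IsPoint.{u} R ∧
    ∃ e : ∀ g : (Cᵒᵖ ⥤ Type u) ⥤ Sheaf K (Type u),
        IsPoint.{u} g → (((g ⋙ fstar) ⟶ xstar) ≃ (g ⟶ R)),
      ∀ (g g' : (Cᵒᵖ ⥤ Type u) ⥤ Sheaf K (Type u)) (hg : IsPoint.{u} g)
        (hg' : IsPoint.{u} g') (φ : g' ⟶ g) (β : (g ⋙ fstar) ⟶ xstar),
        e g' hg' (Functor.whiskerRight φ fstar ≫ β) = φ ≫ e g hg β := by
  haveI hKc : HasColimitsOfSize.{u, u} (Sheaf K (Type u)) :=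
    CategoryTheory.Sheaf.instHasColimitsOfSize
  haveI hxl : PreservesFiniteLimits xstar := hx.1.some
  haveI hxc : PreservesColimitsOfSize.{u, u} xstar := hx.2.some
  haveI hRk : R.IsLeftKanExtension α := hR.isLeftKanExtension
  -- R preserves colimits
  haveI hRc : PreservesColimitsOfSize.{u, u} R :=
    preservesColimits_of_isLeftKanExtension_yoneda R α
  -- R preserves finite limits
  haveI hfsub : PreservesLimitsOfSize.{u, u} fsub := adj.rightAdjoint_preservesLimits
  haveI : PreservesFiniteLimits fsub := PreservesLimitsOfSize.preservesFiniteLimits.{u, u} _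
  haveI : PreservesFiniteLimits (yoneda : C ⥤ Cᵒᵖ ⥤ Type u) :=
    PreservesLimitsOfSize.preservesFiniteLimits.{u, u} _
  haveI : PreservesFiniteLimits (sheafToPresheaf K (Type u)) :=
    PreservesLimitsOfSize.preservesFiniteLimits.{u, u} _
  let A : C ⥤ Sheaf K (Type u) := yoneda ⋙ xstar ⋙ fsub
  let B : C ⥤ (D₂ᵒᵖ ⥤ Type u) := A ⋙ sheafToPresheaf K (Type u)
  haveI : PreservesFiniteLimits A := by
    haveI : PreservesFiniteLimits (xstar ⋙ fsub) := comp_preservesFiniteLimits _ _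
    exact comp_preservesFiniteLimits yoneda (xstar ⋙ fsub)
  haveI : PreservesFiniteLimits B := comp_preservesFiniteLimits _ _
  let L₀ : (Cᵒᵖ ⥤ Type u) ⥤ (D₂ᵒᵖ ⥤ Type u) := uliftYoneda.{u}.leftKanExtension B
  haveI : PreservesColimitsOfSize.{u, u} L₀ :=
    Presheaf.preservesColimitsOfSize_leftKanExtension.{0} B
  haveI hL₀lex : PreservesFiniteLimits L₀ :=
    preservesFiniteLimits_extension_presheaf B L₀ ((Presheaf.isExtensionAlongULiftYoneda.{0} B).symm ≪≫
        Functor.isoWhiskerRight uliftYonedaIsoYoneda.{u, u, u} L₀)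
  let La : (Cᵒᵖ ⥤ Type u) ⥤ Sheaf K (Type u) := L₀ ⋙ presheafToSheaf K (Type u)
  haveI : PreservesFiniteLimits La := comp_preservesFiniteLimits _ _
  haveI : PreservesColimitsOfSize.{u, u} La := comp_preservesColimits _ _
  let eA : A ≅ yoneda ⋙ La :=
    (Functor.rightUnitor A).symm ≪≫
      Functor.isoWhiskerLeft A (asIso (sheafificationAdjunction K (Type u)).counit).symm ≪≫
      (Functor.associator A (sheafToPresheaf K (Type u)) (presheafToSheaf K (Type u))).symm ≪≫
      Functor.isoWhiskerRight ((Presheaf.isExtensionAlongULiftYoneda.{0} B).symm ≪≫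
        Functor.isoWhiskerRight uliftYonedaIsoYoneda.{u, u, u} L₀) (presheafToSheaf K (Type u)) ≪≫
      Functor.associator yoneda L₀ (presheafToSheaf K (Type u))
  haveI : La.IsLeftKanExtension eA.hom :=
    isLeftKanExtension_yoneda La eA
  haveI hRlex : PreservesFiniteLimits R :=
    preservesFiniteLimits_of_natIso (Functor.leftKanExtensionUnique La eA.hom R α)
  refine ⟨⟨⟨hRlex⟩, ⟨hRc⟩⟩, ?_⟩
  -- the natural bijection
  haveI hiso : IsIso α := hR.isIso_hom
  have inst : ∀ g : (Cᵒᵖ ⥤ Type u) ⥤ Sheaf K (Type u), IsPoint.{u} g →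
      g.IsLeftKanExtension (𝟙 (yoneda ⋙ g)) := fun g hg =>
    haveI : PreservesColimitsOfSize.{u, u} g := hg.2.some
    isLeftKanExtension_yoneda g (Iso.refl (yoneda ⋙ g))
  let eqv : ∀ g : (Cᵒᵖ ⥤ Type u) ⥤ Sheaf K (Type u), IsPoint.{u} g →
      (((g ⋙ fstar) ⟶ xstar) ≃ (g ⟶ R)) := fun g hg =>
    haveI := inst g hg
    (transAdj adj g xstar).trans
      ((g.homEquivOfIsLeftKanExtension (𝟙 (yoneda ⋙ g)) (xstar ⋙ fsub)).trans
        (((Iso.refl (yoneda ⋙ g)).homCongr (asIso α)).trans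
          (g.homEquivOfIsLeftKanExtension (𝟙 (yoneda ⋙ g)) R).symm))
  refine ⟨eqv, ?_⟩
  intro g g' hg hg' φ β
  haveI := inst g hg
  haveI := inst g' hg'
  have hfac : ∀ (H : (Cᵒᵖ ⥤ Type u) ⥤ Sheaf K (Type u))
      (ξ : (yoneda ⋙ g) ⟶ yoneda ⋙ H),
      Functor.whiskerLeft yoneda (g.descOfIsLeftKanExtension (𝟙 (yoneda ⋙ g)) H ξ) = ξ := by
    intro H ξ
    have := g.descOfIsLeftKanExtension_fac (𝟙 (yoneda ⋙ g)) H ξ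
    simpa using this
  apply (g'.homEquivOfIsLeftKanExtension (𝟙 (yoneda ⋙ g')) R).injective
  show (g'.homEquivOfIsLeftKanExtension (𝟙 (yoneda ⋙ g')) R)
      ((eqv g' hg') (Functor.whiskerRight φ fstar ≫ β)) = _
  rw [show (eqv g' hg') (Functor.whiskerRight φ fstar ≫ β) =
    (g'.homEquivOfIsLeftKanExtension (𝟙 (yoneda ⋙ g')) R).symm
      (((Iso.refl (yoneda ⋙ g')).homCongr (asIso α))
        ((g'.homEquivOfIsLeftKanExtension (𝟙 (yoneda ⋙ g')) (xstar ⋙ fsub))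
          (transAdj adj g' xstar (Functor.whiskerRight φ fstar ≫ β)))) from rfl]
  rw [Equiv.apply_symm_apply, transAdj_naturality_left]
  rw [show φ ≫ (eqv g hg) β = φ ≫
    (g.homEquivOfIsLeftKanExtension (𝟙 (yoneda ⋙ g)) R).symm
      (((Iso.refl (yoneda ⋙ g)).homCongr (asIso α))
        ((g.homEquivOfIsLeftKanExtension (𝟙 (yoneda ⋙ g)) (xstar ⋙ fsub))
          (transAdj adj g xstar β))) from rfl]
  simp only [Functor.homEquivOfIsLeftKanExtension, Equiv.coe_fn_mk, Iso.homCongr_apply,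
    Iso.refl_inv, Iso.refl_hom, asIso_hom, Category.id_comp, Functor.whiskerLeft_comp, Category.assoc]
  simp only [Equiv.coe_fn_symm_mk]
  rw [hfac]
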